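/- arXiv:1309.5094 — 2 statements merged into one kernel-verified Lean document; each statement's English description precedes it below -/
import Mathlib

section
/- Assume P = Q and fix λ ∈ [0, 1). Define V_0^{CVaR} as the infimum of E[M_0] over all P-supermartingales (M_k)_{k=0}^n satisfying CVaR_λ( (S_k − M_k)^+ ) ≤ α_k for every k ∈ {1,…,n}, and for z = (z_1,…,z_n) define G(z_1,…,z_n) as the infimum of E[M_0] over all P-supermartingales (M_k)_{k=0}^n satisfying (1−λ)^{-1} E[ (S_k − M_k − z_k)^+ ] + z_k ≤ α_k for every k ∈ {1,…,n}. Then V_0^{CVaR} = inf{ G(z_1,…,z_n) : z_k ∈ [0, α_k] for every k }. -/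
open MeasureTheory Filter
open scoped MeasureTheory

/-- A supermartingale (under measure `μ`) on the discrete time interval `{a,…,b}`. -/
def IsSupermartingaleOn {Ω : Type*} {m0 : MeasurableSpace Ω}
    (𝓕 : MeasureTheory.Filtration ℕ m0) (μ : Measure Ω)
    (M : ℕ → Ω → ℝ) (a b : ℕ) : Prop :=
  (∀ k, a ≤ k → k ≤ b → StronglyMeasurable[𝓕 k] (M k)) ∧
  (∀ k, a ≤ k → k ≤ b → Integrable (M k) μ) ∧
  (∀ k, a ≤ k → k < b → (μ[M (k + 1)|𝓕 k]) ≤ᵐ[μ] M k)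

/-- The conditional Value at Risk of a loss `X` at level `lam`:
`CVaR_lam(X) = inf_z { (1-lam)⁻¹ E[(X-z)⁺] + z }`. -/
noncomputable def CVaR {Ω : Type*} {m0 : MeasurableSpace Ω} (P : Measure Ω)
    (lam : ℝ) (X : Ω → ℝ) : ℝ :=
  sInf {y : ℝ | ∃ z : ℝ, y = (1 - lam)⁻¹ * (∫ ω, max (X ω - z) 0 ∂P) + z}

section helpers

variable {Ω : Type*} {m0 : MeasurableSpace Ω}

lemma es_int (P : Measure Ω) [IsFiniteMeasure P] {X : Ω → ℝ} (hX : Integrable X P) (z : ℝ) :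
    Integrable (fun ω => max (X ω - z) 0) P :=
  (hX.sub (integrable_const z)).pos_part

lemma es_integral_nonneg (P : Measure Ω) (X : Ω → ℝ) (z : ℝ) :
    0 ≤ ∫ ω, max (X ω - z) 0 ∂P :=
  integral_nonneg fun _ω => le_max_right _ _

lemma es_le_self (P : Measure Ω) {lam : ℝ} (hlam1 : lam < 1) (X : Ω → ℝ) (z : ℝ) :
    z ≤ (1 - lam)⁻¹ * (∫ ω, max (X ω - z) 0 ∂P) + z := by
  have h1 : (0:ℝ) ≤ (1 - lam)⁻¹ := inv_nonneg.2 (by linarith)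
  nlinarith [es_integral_nonneg P X z]

lemma es_neg_ge (P : Measure Ω) [IsProbabilityMeasure P] {lam : ℝ} (hlam0 : 0 ≤ lam) (hlam1 : lam < 1)
    {X : Ω → ℝ} (hX : Integrable X P) (hX0 : ∀ ω, 0 ≤ X ω) (z : ℝ) (hz : z ≤ 0) :
    (1 - lam)⁻¹ * (∫ ω, max (X ω - 0) 0 ∂P) + 0 ≤
      (1 - lam)⁻¹ * (∫ ω, max (X ω - z) 0 ∂P) + z := by
  have hpos : (0:ℝ) < 1 - lam := by linarith
  have h1 : (1:ℝ) ≤ (1 - lam)⁻¹ := (one_le_inv₀ hpos).2 (by linarith)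
  have e1 : ∫ ω, max (X ω - z) 0 ∂P = (∫ ω, X ω ∂P) - z := by
    rw [show (fun ω => max (X ω - z) 0) = fun ω => X ω - z from ?_,
      integral_sub hX (integrable_const z), integral_const]
    · simp
    · funext ω; exact max_eq_left (by linarith [hX0 ω])
  have e0 : ∫ ω, max (X ω - 0) 0 ∂P = ∫ ω, X ω ∂P := by
    refine integral_congr_ae (Filter.EventuallyEq.of_eq ?_)
    funext ω; rw [sub_zero]; exact max_eq_left (hX0 ω)
  rw [e1, e0]
  nlinarith

lemma es_nonneg (P : Measure Ω) [IsProbabilityMeasure P] {lam : ℝ} (hlam0 : 0 ≤ lam) (hlam1 : lam < 1)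
    {X : Ω → ℝ} (hX : Integrable X P) (hX0 : ∀ ω, 0 ≤ X ω) (z : ℝ) :
    0 ≤ (1 - lam)⁻¹ * (∫ ω, max (X ω - z) 0 ∂P) + z := by
  have h1 : (0:ℝ) ≤ (1 - lam)⁻¹ := inv_nonneg.2 (by linarith)
  rcases le_or_gt z 0 with hz | hz
  · refine le_trans ?_ (es_neg_ge P hlam0 hlam1 hX hX0 z hz)
    nlinarith [es_integral_nonneg P X 0]
  · nlinarith [es_integral_nonneg P X z]

lemma cvar_bddBelow (P : Measure Ω) [IsProbabilityMeasure P] {lam : ℝ} (hlam0 : 0 ≤ lam) (hlam1 : lam < 1)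
    {X : Ω → ℝ} (hX : Integrable X P) (hX0 : ∀ ω, 0 ≤ X ω) :
    BddBelow {y : ℝ | ∃ z : ℝ, y = (1 - lam)⁻¹ * (∫ ω, max (X ω - z) 0 ∂P) + z} :=
  ⟨0, by rintro y ⟨z, rfl⟩; exact es_nonneg P hlam0 hlam1 hX hX0 z⟩

lemma cvar_le_es (P : Measure Ω) [IsProbabilityMeasure P] {lam : ℝ} (hlam0 : 0 ≤ lam) (hlam1 : lam < 1)
    {X : Ω → ℝ} (hX : Integrable X P) (hX0 : ∀ ω, 0 ≤ X ω) (z : ℝ) :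
    CVaR P lam X ≤ (1 - lam)⁻¹ * (∫ ω, max (X ω - z) 0 ∂P) + z :=
  csInf_le (cvar_bddBelow P hlam0 hlam1 hX hX0) ⟨z, rfl⟩

lemma es_lipschitz (P : Measure Ω) [IsProbabilityMeasure P] {X : Ω → ℝ}
    (hX : Integrable X P) : LipschitzWith 1 (fun z => ∫ ω, max (X ω - z) 0 ∂P) := by
  refine LipschitzWith.of_dist_le_mul fun z w => ?_
  rw [Real.dist_eq, Real.dist_eq, NNReal.coe_one, one_mul]
  have hsub : ∫ ω, max (X ω - z) 0 ∂P - ∫ ω, max (X ω - w) 0 ∂P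
      = ∫ ω, (max (X ω - z) 0 - max (X ω - w) 0) ∂P :=
    (integral_sub (es_int P hX z) (es_int P hX w)).symm
  rw [hsub]
  calc |∫ ω, (max (X ω - z) 0 - max (X ω - w) 0) ∂P|
      ≤ ∫ ω, |max (X ω - z) 0 - max (X ω - w) 0| ∂P := by
        have h := norm_integral_le_integral_norm (μ := P)
          (f := fun ω => max (X ω - z) 0 - max (X ω - w) 0)
        simpa [Real.norm_eq_abs] using h
    _ ≤ ∫ _ω, |z - w| ∂P := by
        refine integral_mono (((es_int P hX z).sub (es_int P hX w)).abs) (integrable_const _)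
          fun ω => ?_
        calc |max (X ω - z) 0 - max (X ω - w) 0| ≤ |(X ω - z) - (X ω - w)| :=
              abs_max_sub_max_le_abs _ _ _
          _ = |z - w| := by rw [show (X ω - z) - (X ω - w) = w - z by ring, abs_sub_comm]
    _ = |z - w| := by simp

/-- Attainment of the CVaR infimum within `[0, α]`. -/
lemma cvar_attained (P : Measure Ω) [IsProbabilityMeasure P] {lam : ℝ} (hlam0 : 0 ≤ lam) (hlam1 : lam < 1)
    {X : Ω → ℝ} (hX : Integrable X P) (hX0 : ∀ ω, 0 ≤ X ω)
    {α : ℝ} (hα : 0 ≤ α) (hC : CVaR P lam X ≤ α) :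
    ∃ z, 0 ≤ z ∧ z ≤ α ∧ (1 - lam)⁻¹ * (∫ ω, max (X ω - z) 0 ∂P) + z ≤ α := by
  set g : ℝ → ℝ := fun z => (1 - lam)⁻¹ * (∫ ω, max (X ω - z) 0 ∂P) + z with hg
  have hgc : Continuous g :=
    (continuous_const.mul (es_lipschitz P hX).continuous).add continuous_id
  obtain ⟨z, hzK, hzmin⟩ := (isCompact_Icc (a := (0:ℝ)) (b := α + 1)).exists_isMinOn
    (Set.nonempty_Icc.2 (by linarith)) hgc.continuousOn
  have hmin : ∀ w ∈ Set.Icc (0:ℝ) (α+1), g z ≤ g w := fun w hw => hzmin hw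
  have hkey : g z ≤ α := by
    by_contra hlt
    push_neg at hlt
    have hlb : ∀ y ∈ {y : ℝ | ∃ w : ℝ, y = (1 - lam)⁻¹ * (∫ ω, max (X ω - w) 0 ∂P) + w},
        min (g z) (α + 1) ≤ y := by
      rintro y ⟨w, rfl⟩
      rcases le_or_gt w 0 with hw | hw
      · exact le_trans (min_le_left _ _)
          (le_trans (hmin 0 ⟨le_refl _, by linarith⟩) (es_neg_ge P hlam0 hlam1 hX hX0 w hw))
      rcases le_or_gt w (α + 1) with hw2 | hw2
      · exact le_trans (min_le_left _ _) (hmin w ⟨hw.le, hw2⟩)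
      · exact le_trans (min_le_right _ _) (le_trans hw2.le (es_le_self P hlam1 X w))
    have h2 : min (g z) (α + 1) ≤ CVaR P lam X := le_csInf ⟨g 0, 0, rfl⟩ hlb
    have h3 : min (g z) (α + 1) ≤ α := le_trans h2 hC
    rcases min_le_iff.1 h3 with h | h <;> linarith
  exact ⟨z, hzK.1, le_trans (es_le_self P hlam1 X z) hkey, hkey⟩

end helpers

section part2

variable {Ω : Type*} {m0 : MeasurableSpace Ω}

lemma max_max_sub_nonneg (a : ℝ) {z : ℝ} (hz : 0 ≤ z) :
    max (max a 0 - z) 0 = max (a - z) 0 := by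
  rcases le_total a 0 with h | h
  · rw [max_eq_right h, zero_sub, max_eq_right (by linarith : -z ≤ (0:ℝ)), eq_comm,
      max_eq_right (by linarith : a - z ≤ (0:ℝ))]
  · rw [max_eq_left h]

lemma exists_dominating_martingale (P : Measure Ω) [IsProbabilityMeasure P]
    (𝓕 : Filtration ℕ m0) (n : ℕ) (S : ℕ → Ω → ℝ) (hS : Adapted 𝓕 S)
    (hSint : ∀ k, Integrable (S k) P) :
    ∃ M : ℕ → Ω → ℝ, IsSupermartingaleOn 𝓕 P M 0 n ∧
      ∀ k, 1 ≤ k → k ≤ n → S k ≤ᵐ[P] M k := by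
  set T : Ω → ℝ := fun ω => ∑ j ∈ Finset.Icc 1 n, max (S j ω) 0 with hT
  have hTint : Integrable T P := integrable_finset_sum _ fun j _ => (hSint j).pos_part
  refine ⟨fun k => P[T|𝓕 k],
    ⟨fun k _ _ => stronglyMeasurable_condExp, fun k _ _ => integrable_condExp,
      fun k _ _ => (condExp_condExp_of_le (𝓕.mono (Nat.le_succ k)) (𝓕.le (k+1))).le⟩, ?_⟩
  intro k hk1 hkn
  have h1 : ∀ ω, S k ω ≤ T ω := fun ω =>
    le_trans (le_max_left _ _)
      (Finset.single_le_sum (f := fun j => max (S j ω) 0)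
        (fun j _ => le_max_right _ _) (Finset.mem_Icc.2 ⟨hk1, hkn⟩))
  have h2 := condExp_mono (m := 𝓕 k) (hSint k) hTint (Eventually.of_forall h1)
  rwa [condExp_of_stronglyMeasurable (𝓕.le k) (hS k).stronglyMeasurable (hSint k)] at h2

lemma cost_lb (P : Measure Ω) [IsProbabilityMeasure P] (𝓕 : Filtration ℕ m0)
    {n : ℕ} (hn : 1 ≤ n) (S : ℕ → Ω → ℝ) (hSint : ∀ k, Integrable (S k) P)
    {lam : ℝ} (hlam0 : 0 ≤ lam) (hlam1 : lam < 1) {α1 z1 : ℝ}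
    (hz0 : 0 ≤ z1) (hz1 : z1 ≤ α1)
    {M : ℕ → Ω → ℝ} (hM : IsSupermartingaleOn 𝓕 P M 0 n)
    (hES : (1 - lam)⁻¹ * (∫ ω, max (S 1 ω - M 1 ω - z1) 0 ∂P) + z1 ≤ α1) :
    (∫ ω, S 1 ω ∂P) - α1 ≤ ∫ ω, M 0 ω ∂P := by
  have hM1 : Integrable (M 1) P := hM.2.1 1 (by omega) hn
  have hM0 : Integrable (M 0) P := hM.2.1 0 le_rfl (by omega)
  have hmaxint : Integrable (fun ω => max (S 1 ω - M 1 ω - z1) 0) P :=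
    (((hSint 1).sub hM1).sub (integrable_const z1)).pos_part
  have hstep : ∫ ω, M 1 ω ∂P ≤ ∫ ω, M 0 ω ∂P := by
    have h := hM.2.2 0 le_rfl (by omega)
    calc ∫ ω, M 1 ω ∂P = ∫ ω, (P[M 1|𝓕 0]) ω ∂P := (integral_condExp (𝓕.le 0)).symm
      _ ≤ ∫ ω, M 0 ω ∂P := integral_mono_ae integrable_condExp hM0 h
  have hpt : ∀ ω, S 1 ω - M 1 ω ≤ max (S 1 ω - M 1 ω - z1) 0 + z1 := fun ω => by
    have := le_max_left (S 1 ω - M 1 ω - z1) (0:ℝ); linarith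
  have h2 : (∫ ω, S 1 ω ∂P) - ∫ ω, M 1 ω ∂P
      ≤ (∫ ω, max (S 1 ω - M 1 ω - z1) 0 ∂P) + z1 := by
    rw [← integral_sub (hSint 1) hM1]
    calc ∫ ω, (S 1 ω - M 1 ω) ∂P
        ≤ ∫ ω, (max (S 1 ω - M 1 ω - z1) 0 + z1) ∂P :=
          integral_mono ((hSint 1).sub hM1) (hmaxint.add (integrable_const z1)) hpt
      _ = (∫ ω, max (S 1 ω - M 1 ω - z1) 0 ∂P) + z1 := by
          rw [integral_add hmaxint (integrable_const z1), integral_const]; simp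
  have hI0 : 0 ≤ ∫ ω, max (S 1 ω - M 1 ω - z1) 0 ∂P :=
    integral_nonneg fun ω => le_max_right _ _
  have hpos : (0:ℝ) < 1 - lam := by linarith
  have hc : (1 - lam) * (1 - lam)⁻¹ = 1 := mul_inv_cancel₀ (ne_of_gt hpos)
  nlinarith [hES, hI0, hstep, h2]
end part2

/-- Proposition 5.2: `V₀^CVaR = inf { G(z₁,…,z_n) : z_k ∈ [0, α_k] }`, where
`G(z)` is the minimal cost of a supermartingale satisfying the expected-shortfall
constraints `(1-λ)⁻¹ E[(S_k - M_k - z_k)⁺] + z_k ≤ α_k`. -/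
theorem stmt_18
    {Ω : Type*} {m0 : MeasurableSpace Ω} (P : Measure Ω) [IsProbabilityMeasure P]
    (𝓕 : Filtration ℕ m0) (n : ℕ) (hn : 1 ≤ n)
    (htriv : ∀ s : Set Ω, MeasurableSet[𝓕 0] s → P s = 0 ∨ P s = 1)
    (S : ℕ → Ω → ℝ) (hS : Adapted 𝓕 S) (hSint : ∀ k, Integrable (S k) P)
    (α : ℕ → ℝ) (hα : ∀ k, 1 ≤ k → k ≤ n → 0 ≤ α k)
    (lam : ℝ) (hlam0 : 0 ≤ lam) (hlam1 : lam < 1) :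
    sInf {x : ℝ | ∃ M : ℕ → Ω → ℝ, IsSupermartingaleOn 𝓕 P M 0 n ∧
        (∀ k, 1 ≤ k → k ≤ n →
          CVaR P lam (fun ω => max (S k ω - M k ω) 0) ≤ α k) ∧
        x = ∫ ω, M 0 ω ∂P}
    =
    sInf {y : ℝ | ∃ z : ℕ → ℝ, (∀ k, 1 ≤ k → k ≤ n → z k ∈ Set.Icc 0 (α k)) ∧
        y = sInf {x : ℝ | ∃ M : ℕ → Ω → ℝ, IsSupermartingaleOn 𝓕 P M 0 n ∧
          (∀ k, 1 ≤ k → k ≤ n →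
            (1 - lam)⁻¹ * (∫ ω, max (S k ω - M k ω - z k) 0 ∂P) + z k ≤ α k) ∧
          x = ∫ ω, M 0 ω ∂P}} := by
  classical
  set A : Set ℝ := {x : ℝ | ∃ M : ℕ → Ω → ℝ, IsSupermartingaleOn 𝓕 P M 0 n ∧
        (∀ k, 1 ≤ k → k ≤ n →
          CVaR P lam (fun ω => max (S k ω - M k ω) 0) ≤ α k) ∧
        x = ∫ ω, M 0 ω ∂P} with hA
  set Gs : (ℕ → ℝ) → Set ℝ := fun z => {x : ℝ | ∃ M : ℕ → Ω → ℝ,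
      IsSupermartingaleOn 𝓕 P M 0 n ∧
      (∀ k, 1 ≤ k → k ≤ n →
        (1 - lam)⁻¹ * (∫ ω, max (S k ω - M k ω - z k) 0 ∂P) + z k ≤ α k) ∧
      x = ∫ ω, M 0 ω ∂P} with hGs
  set B : Set ℝ := {y : ℝ | ∃ z : ℕ → ℝ, (∀ k, 1 ≤ k → k ≤ n → z k ∈ Set.Icc 0 (α k)) ∧
      y = sInf (Gs z)} with hB
  -- basic integrability facts
  have hXint : ∀ (M : ℕ → Ω → ℝ), IsSupermartingaleOn 𝓕 P M 0 n → ∀ k, k ≤ n →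
      Integrable (fun ω => max (S k ω - M k ω) 0) P := fun M hM k hk =>
    ((hSint k).sub (hM.2.1 k (Nat.zero_le k) hk)).pos_part
  -- the integral identity for z ≥ 0
  have hId : ∀ (M : ℕ → Ω → ℝ) (k : ℕ) (z : ℝ), 0 ≤ z →
      (∫ ω, max (max (S k ω - M k ω) 0 - z) 0 ∂P) =
        ∫ ω, max (S k ω - M k ω - z) 0 ∂P := by
    intro M k z hz
    refine integral_congr_ae (Eventually.of_forall fun ω => ?_)
    exact max_max_sub_nonneg _ hz
  -- the dominating martingale witness
  obtain ⟨W, hWsm, hWdom⟩ := exists_dominating_martingale P 𝓕 n S hS hSint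
  have hWes : ∀ (k : ℕ), 1 ≤ k → k ≤ n → ∀ (z : ℝ), 0 ≤ z →
      (∫ ω, max (S k ω - W k ω - z) 0 ∂P) = 0 := by
    intro k hk1 hkn z hz
    have h0 : (fun ω => max (S k ω - W k ω - z) 0) =ᵐ[P] (fun _ => (0:ℝ)) := by
      filter_upwards [hWdom k hk1 hkn] with ω hω
      exact max_eq_right (by linarith)
    rw [integral_congr_ae h0, integral_zero]
  have hinv0 : (0:ℝ) ≤ (1 - lam)⁻¹ := inv_nonneg.2 (by linarith)
  -- W is feasible for every Gs z with z in the box, and for A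
  have hWG : ∀ z : ℕ → ℝ, (∀ k, 1 ≤ k → k ≤ n → z k ∈ Set.Icc 0 (α k)) →
      (∫ ω, W 0 ω ∂P) ∈ Gs z := by
    intro z hz
    refine ⟨W, hWsm, fun k hk1 hkn => ?_, rfl⟩
    rw [hWes k hk1 hkn (z k) (hz k hk1 hkn).1, mul_zero, zero_add]
    exact (hz k hk1 hkn).2
  have hWA : (∫ ω, W 0 ω ∂P) ∈ A := by
    refine ⟨W, hWsm, fun k hk1 hkn => ?_, rfl⟩
    have h1 := cvar_le_es P hlam0 hlam1 (hXint W hWsm k hkn)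
      (fun ω => le_max_right _ _) 0
    rw [hId W k 0 le_rfl, hWes k hk1 hkn 0 le_rfl, mul_zero, add_zero] at h1
    exact le_trans h1 (hα k hk1 hkn)
  -- lower bounds
  set c : ℝ := (∫ ω, S 1 ω ∂P) - α 1 with hc
  have hlbG : ∀ z : ℕ → ℝ, (∀ k, 1 ≤ k → k ≤ n → z k ∈ Set.Icc 0 (α k)) →
      ∀ x ∈ Gs z, c ≤ x := by
    rintro z hz x ⟨M, hM, hcon, rfl⟩
    exact cost_lb P 𝓕 hn S hSint hlam0 hlam1 (hz 1 le_rfl hn).1 (hz 1 le_rfl hn).2 hM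
      (hcon 1 le_rfl hn)
  have hlbA : ∀ x ∈ A, c ≤ x := by
    rintro x ⟨M, hM, hcon, rfl⟩
    obtain ⟨z1, hz10, hz11, hz1es⟩ := cvar_attained P hlam0 hlam1 (hXint M hM 1 hn)
      (fun ω => le_max_right _ _) (hα 1 le_rfl hn) (hcon 1 le_rfl hn)
    rw [hId M 1 z1 hz10] at hz1es
    exact cost_lb P 𝓕 hn S hSint hlam0 hlam1 hz10 hz11 hM hz1es
  have hbddA : BddBelow A := ⟨c, hlbA⟩
  have hAne : A.Nonempty := ⟨_, hWA⟩
  have hbddB : BddBelow B := by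
    refine ⟨c, ?_⟩
    rintro y ⟨z, hz, rfl⟩
    exact le_csInf ⟨_, hWG z hz⟩ (hlbG z hz)
  have hBne : B.Nonempty :=
    ⟨sInf (Gs fun _ => 0), fun _ => 0, fun k hk1 hkn => ⟨le_rfl, hα k hk1 hkn⟩, rfl⟩
  refine le_antisymm ?_ ?_
  · -- sInf A ≤ sInf B
    refine le_csInf hBne ?_
    rintro y ⟨z, hz, rfl⟩
    refine le_trans (csInf_le_csInf hbddA ⟨_, hWG z hz⟩ ?_) le_rfl
    rintro x ⟨M, hM, hcon, rfl⟩
    refine ⟨M, hM, fun k hk1 hkn => ?_, rfl⟩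
    have h1 := cvar_le_es P hlam0 hlam1 (hXint M hM k hkn)
      (fun ω => le_max_right _ _) (z k)
    rw [hId M k (z k) (hz k hk1 hkn).1] at h1
    exact le_trans h1 (hcon k hk1 hkn)
  · -- sInf B ≤ sInf A
    refine le_csInf hAne ?_
    rintro x ⟨M, hM, hcon, rfl⟩
    have hch : ∀ k, ∃ zk : ℝ, 1 ≤ k → k ≤ n → (0 ≤ zk ∧ zk ≤ α k ∧
        (1 - lam)⁻¹ * (∫ ω, max (S k ω - M k ω - zk) 0 ∂P) + zk ≤ α k) := by
      intro k
      by_cases h : 1 ≤ k ∧ k ≤ n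
      · obtain ⟨zk, h0, h1, h2⟩ := cvar_attained P hlam0 hlam1 (hXint M hM k h.2)
          (fun ω => le_max_right _ _) (hα k h.1 h.2) (hcon k h.1 h.2)
        rw [hId M k zk h0] at h2
        exact ⟨zk, fun _ _ => ⟨h0, h1, h2⟩⟩
      · exact ⟨0, fun h1 h2 => absurd ⟨h1, h2⟩ h⟩
    choose z hz using hch
    have hzbox : ∀ k, 1 ≤ k → k ≤ n → z k ∈ Set.Icc 0 (α k) := fun k h1 h2 =>
      ⟨(hz k h1 h2).1, (hz k h1 h2).2.1⟩
    have hMG : (∫ ω, M 0 ω ∂P) ∈ Gs z :=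
      ⟨M, hM, fun k h1 h2 => (hz k h1 h2).2.2, rfl⟩
    calc sInf B ≤ sInf (Gs z) := csInf_le hbddB ⟨z, hzbox, rfl⟩
      _ ≤ ∫ ω, M 0 ω ∂P := csInf_le ⟨c, hlbG z hzbox⟩ hMG
end

section
/- Assume P = Q, fix λ ∈ [0, 1), let α_1,…,α_n ≥ 0, and suppose the process (S_k − α_k)_{k=1}^n is a.s. non-decreasing in k. Then V_0^{CVaR}, the infimum of E[M_0] over all P-supermartingales (M_k)_{k=0}^n satisfying CVaR_λ( (S_k − M_k)^+ ) ≤ α_k for every k ∈ {1,…,n}, equals E[S_n] − α_n. -/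
open MeasureTheory Filter
open scoped MeasureTheory

section Aux

variable {Ω : Type*} {m0 : MeasurableSpace Ω} (P : Measure Ω) [IsProbabilityMeasure P]

/-- Every element of the CVaR set is at least `E[X]` (for `X ≥ 0` integrable). -/
lemma cvar_set_lb {lam : ℝ} (hlam0 : 0 ≤ lam) (hlam1 : lam < 1)
    {X : Ω → ℝ} (hX : Integrable X P) (hX0 : ∀ ω, 0 ≤ X ω) :
    ∀ y ∈ {y : ℝ | ∃ z : ℝ, y = (1 - lam)⁻¹ * (∫ ω, max (X ω - z) 0 ∂P) + z},
      (∫ ω, X ω ∂P) ≤ y := by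
  rintro y ⟨z, rfl⟩
  have h1 : (0:ℝ) < 1 - lam := by linarith
  have hinv : 1 ≤ (1 - lam)⁻¹ := (one_le_inv_iff₀).mpr ⟨h1, by linarith⟩
  have hXz : Integrable (fun ω => X ω - z) P := hX.sub (integrable_const z)
  have hpos : Integrable (fun ω => max (X ω - z) 0) P := hXz.pos_part
  have I0 : 0 ≤ ∫ ω, max (X ω - z) 0 ∂P :=
    integral_nonneg fun ω => le_max_right _ _
  have I1 : (∫ ω, (X ω - z) ∂P) ≤ ∫ ω, max (X ω - z) 0 ∂P :=
    integral_mono hXz hpos fun ω => le_max_left _ _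
  have I2 : (∫ ω, (X ω - z) ∂P) = (∫ ω, X ω ∂P) - z := by
    rw [integral_sub hX (integrable_const z)]
    simp
  have I3 : (∫ ω, max (X ω - z) 0 ∂P) ≤ (1 - lam)⁻¹ * ∫ ω, max (X ω - z) 0 ∂P :=
    le_mul_of_one_le_left I0 hinv
  linarith

lemma exp_le_cvar {lam : ℝ} (hlam0 : 0 ≤ lam) (hlam1 : lam < 1)
    {X : Ω → ℝ} (hX : Integrable X P) (hX0 : ∀ ω, 0 ≤ X ω) :
    (∫ ω, X ω ∂P) ≤ CVaR P lam X :=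
  le_csInf ⟨_, 0, rfl⟩ (cvar_set_lb P hlam0 hlam1 hX hX0)

lemma cvar_le_of_ae_le {lam : ℝ} (hlam0 : 0 ≤ lam) (hlam1 : lam < 1)
    {X : Ω → ℝ} (hX : Integrable X P) (hX0 : ∀ ω, 0 ≤ X ω)
    {c : ℝ} (hle : ∀ᵐ ω ∂P, X ω ≤ c) :
    CVaR P lam X ≤ c := by
  have hzero : (fun ω => max (X ω - c) 0) =ᵐ[P] (fun _ => (0:ℝ)) := by
    filter_upwards [hle] with ω h
    simp [max_eq_right, sub_nonpos.mpr h]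
  have hI : (∫ ω, max (X ω - c) 0 ∂P) = 0 := by
    rw [integral_congr_ae hzero]; simp
  refine csInf_le ⟨_, cvar_set_lb P hlam0 hlam1 hX hX0⟩ ⟨c, ?_⟩
  rw [hI]; ring

end Aux

/-- Proposition 5.3: if `(S_k - α_k)_{k=1}^n` is a.s. non-decreasing, then
`V₀^CVaR`, the minimal cost of a `P`-supermartingale satisfying
`CVaR_λ((S_k - M_k)⁺) ≤ α_k` for all `k ∈ {1,…,n}`, equals `E[S_n] - α_n`. -/
theorem stmt_19
    {Ω : Type*} {m0 : MeasurableSpace Ω} (P : Measure Ω) [IsProbabilityMeasure P]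
    (𝓕 : Filtration ℕ m0) (n : ℕ) (hn : 1 ≤ n)
    (htriv : ∀ s : Set Ω, MeasurableSet[𝓕 0] s → P s = 0 ∨ P s = 1)
    (S : ℕ → Ω → ℝ) (hS : Adapted 𝓕 S) (hSint : ∀ k, Integrable (S k) P)
    (α : ℕ → ℝ) (hα : ∀ k, 1 ≤ k → k ≤ n → 0 ≤ α k)
    (hmono : ∀ᵐ ω ∂P, ∀ j k, 1 ≤ j → j ≤ k → k ≤ n →
      S j ω - α j ≤ S k ω - α k)
    (lam : ℝ) (hlam0 : 0 ≤ lam) (hlam1 : lam < 1) :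
    sInf {x : ℝ | ∃ M : ℕ → Ω → ℝ, IsSupermartingaleOn 𝓕 P M 0 n ∧
        (∀ k, 1 ≤ k → k ≤ n →
          CVaR P lam (fun ω => max (S k ω - M k ω) 0) ≤ α k) ∧
        x = ∫ ω, M 0 ω ∂P}
      = (∫ ω, S n ω ∂P) - α n := by
  set T : ℝ := (∫ ω, S n ω ∂P) - α n with hT
  -- Lower bound: every element of the set is at least `T`.
  have hlb : ∀ x ∈ {x : ℝ | ∃ M : ℕ → Ω → ℝ, IsSupermartingaleOn 𝓕 P M 0 n ∧
        (∀ k, 1 ≤ k → k ≤ n →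
          CVaR P lam (fun ω => max (S k ω - M k ω) 0) ≤ α k) ∧
        x = ∫ ω, M 0 ω ∂P}, T ≤ x := by
    rintro x ⟨M, ⟨hMmeas, hMint, hMsm⟩, hMc, rfl⟩
    have hdec : ∀ k, k ≤ n → (∫ ω, M k ω ∂P) ≤ ∫ ω, M 0 ω ∂P := by
      intro k
      induction k with
      | zero => intro _; exact le_rfl
      | succ k ih =>
        intro hk
        have hk' : k < n := Nat.lt_of_succ_le hk
        have step : (∫ ω, M (k+1) ω ∂P) ≤ ∫ ω, M k ω ∂P := by
          have := integral_condExp (μ := P) (f := M (k+1)) (𝓕.le k)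
          calc (∫ ω, M (k+1) ω ∂P) = ∫ ω, (P[M (k+1)|𝓕 k]) ω ∂P := this.symm
            _ ≤ ∫ ω, M k ω ∂P :=
              integral_mono_ae integrable_condExp (hMint k (Nat.zero_le _) hk'.le)
                (hMsm k (Nat.zero_le _) hk')
        exact step.trans (ih hk'.le)
    have hXint : Integrable (fun ω => max (S n ω - M n ω) 0) P :=
      ((hSint n).sub (hMint n (Nat.zero_le _) le_rfl)).pos_part
    have hcvar := hMc n hn le_rfl
    have hexp := exp_le_cvar P hlam0 hlam1 hXint (fun ω => le_max_right _ _)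
    have hI : (∫ ω, (S n ω - M n ω) ∂P) ≤ ∫ ω, max (S n ω - M n ω) 0 ∂P :=
      integral_mono ((hSint n).sub (hMint n (Nat.zero_le _) le_rfl)) hXint
        fun ω => le_max_left _ _
    have hIsub : (∫ ω, (S n ω - M n ω) ∂P) = (∫ ω, S n ω ∂P) - ∫ ω, M n ω ∂P :=
      integral_sub (hSint n) (hMint n (Nat.zero_le _) le_rfl)
    have := hdec n le_rfl
    rw [hT]
    linarith
  -- The witness supermartingale.
  set M : ℕ → Ω → ℝ := fun k ω => (P[S n|𝓕 k]) ω - α n with hMdef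
  have hmem : T ∈ {x : ℝ | ∃ M : ℕ → Ω → ℝ, IsSupermartingaleOn 𝓕 P M 0 n ∧
        (∀ k, 1 ≤ k → k ≤ n →
          CVaR P lam (fun ω => max (S k ω - M k ω) 0) ≤ α k) ∧
        x = ∫ ω, M 0 ω ∂P} := by
    refine ⟨M, ⟨?_, ?_, ?_⟩, ?_, ?_⟩
    · intro k _ _
      exact stronglyMeasurable_condExp.sub stronglyMeasurable_const
    · intro k _ _
      exact integrable_condExp.sub (integrable_const _)
    · intro k _ _
      have h1 : M (k+1) = (P[S n|𝓕 (k+1)]) - (fun _ => α n) := rfl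
      have h2 : (P[M (k+1)|𝓕 k]) =ᵐ[P]
          (P[(P[S n|𝓕 (k+1)])|𝓕 k]) - (P[(fun _ => α n)|𝓕 k]) := by
        rw [h1]; exact condExp_sub (integrable_condExp (μ := P) (m := 𝓕 (k+1)) (f := S n)) (integrable_const (α n)) _
      have h3 : (P[(P[S n|𝓕 (k+1)])|𝓕 k]) =ᵐ[P] (P[S n|𝓕 k]) :=
        condExp_condExp_of_le (𝓕.mono (Nat.le_succ k)) (𝓕.le (k+1))
      have h4 : (P[(fun _ : Ω => α n)|𝓕 k]) = fun _ => α n := condExp_const (𝓕.le k) _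
      filter_upwards [h2, h3] with ω hω2 hω3
      simp only [Pi.sub_apply, h4] at hω2
      rw [hω2, hω3]
    · intro k hk1 hkn
      have hg : Integrable (fun ω => S k ω + (α n - α k)) P :=
        (hSint k).add (integrable_const _)
      have hgm : StronglyMeasurable[𝓕 k] (fun ω => S k ω + (α n - α k)) :=
        (hS k).stronglyMeasurable.add stronglyMeasurable_const
      have hle : (fun ω => S k ω + (α n - α k)) ≤ᵐ[P] S n := by
        filter_upwards [hmono] with ω hω
        have := hω k n hk1 hkn le_rfl
        show S k ω + (α n - α k) ≤ S n ω
        linarith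
      have hcm : (P[(fun ω => S k ω + (α n - α k))|𝓕 k]) ≤ᵐ[P] (P[S n|𝓕 k]) :=
        condExp_mono hg (hSint n) hle
      have heq : (P[(fun ω => S k ω + (α n - α k))|𝓕 k]) =
          (fun ω => S k ω + (α n - α k)) :=
        condExp_of_stronglyMeasurable (𝓕.le k) hgm hg
      rw [heq] at hcm
      have hXint : Integrable (fun ω => max (S k ω - M k ω) 0) P :=
        ((hSint k).sub (integrable_condExp.sub (integrable_const _))).pos_part
      refine cvar_le_of_ae_le P hlam0 hlam1 hXint (fun ω => le_max_right _ _) ?_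
      filter_upwards [hcm] with ω hω
      have hαk : 0 ≤ α k := hα k hk1 hkn
      have : S k ω - M k ω ≤ α k := by
        rw [hMdef]; dsimp only
        linarith
      exact max_le this hαk
    · have : (∫ ω, M 0 ω ∂P) = (∫ ω, (P[S n|𝓕 0]) ω ∂P) - α n := by
        rw [hMdef]
        rw [integral_sub integrable_condExp (integrable_const _)]
        simp
      rw [this, integral_condExp (𝓕.le 0), hT]
  exact le_antisymm (csInf_le ⟨T, hlb⟩ hmem) (le_csInf ⟨T, hmem⟩ hlb)
end
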